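/- Let G be a bipartite graph with a twin class R such that |R| > |N(N(R)) \ R|, and let u ∈ R. Then for every integer k ≥ 0, G admits a biclustering of cost at most k if and only if G − u admits a biclustering of cost at most k. -/

import Mathlib

def BipartiteWith {V : Type*} (G : SimpleGraph V) (side : V → Bool) : Prop :=
  ∀ u v, G.Adj u v → side u ≠ side v

def BiclusterGraph {V : Type*} (G : SimpleGraph V) (side : V → Bool) : Prop :=
  ∀ u v, G.Reachable u v → side u ≠ side v → G.Adj u v

def Biclustering {V : Type*} (B : SimpleGraph V) (side : V → Bool) : Prop :=
  BipartiteWith B side ∧ BiclusterGraph B side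

open Classical

namespace StmtAux

variable {V : Type*}

/-- The bicluster graph associated to a labelling. -/
def clG {L : Type*} (lab : V → L) (side : V → Bool) : SimpleGraph V where
  Adj x y := lab x = lab y ∧ side x ≠ side y
  symm := ⟨fun x y h => ⟨h.1.symm, h.2.symm⟩⟩
  loopless := ⟨fun x h => h.2 rfl⟩

lemma clG_lab_eq_of_walk {L : Type*} {lab : V → L} {side : V → Bool} {x y : V}
    (w : (clG lab side).Walk x y) : lab x = lab y := by
  induction w with
  | nil => rfl
  | cons h _ ih => exact h.1.trans ih

lemma clG_biclustering {L : Type*} (lab : V → L) (side : V → Bool) :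
    Biclustering (clG lab side) side := by
  constructor
  · intro x y h; exact h.2
  · intro x y hr hs
    obtain ⟨w⟩ := hr
    exact ⟨clG_lab_eq_of_walk w, hs⟩

lemma clG_nb {L : Type*} (lab : V → L) (side : V → Bool) (x y : V) :
    y ∈ (clG lab side).neighborSet x ↔ (lab y = lab x ∧ side y ≠ side x) := by
  constructor
  · intro h; exact ⟨h.1.symm, fun hc => h.2 hc.symm⟩
  · intro h; exact ⟨h.1.symm, fun hc => h.2 hc.symm⟩

lemma bicl_adj {B : SimpleGraph V} {side : V → Bool} (hB : Biclustering B side) (x y : V) :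
    B.Adj x y ↔ (B.connectedComponentMk x = B.connectedComponentMk y ∧ side x ≠ side y) := by
  constructor
  · intro h; exact ⟨SimpleGraph.ConnectedComponent.sound h.reachable, hB.1 x y h⟩
  · intro h; exact hB.2 x y (SimpleGraph.ConnectedComponent.eq.mp h.1) h.2

/-- Counting lemma: cost of a pair of bipartite graphs, summed per vertex on side `b`. -/
lemma cost_eq_sum [Fintype V] [DecidableEq V] (G B : SimpleGraph V) (side : V → Bool)
    (hG : BipartiteWith G side) (hB : BipartiteWith B side) (b : Bool) :
    (symmDiff G.edgeSet B.edgeSet).ncard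
      = ∑ x ∈ Finset.univ.filter (fun x => side x = b),
          (symmDiff (G.neighborSet x) (B.neighborSet x)).ncard := by
  classical
  have hmem : ∀ x y : V, y ∈ symmDiff (G.neighborSet x) (B.neighborSet x) ↔
      ((G.Adj x y ∧ ¬ B.Adj x y) ∨ (B.Adj x y ∧ ¬ G.Adj x y)) := by
    intro x y
    rw [Set.mem_symmDiff]
    simp [SimpleGraph.mem_neighborSet]
  have heme : ∀ x y : V, s(x, y) ∈ symmDiff G.edgeSet B.edgeSet ↔
      ((G.Adj x y ∧ ¬ B.Adj x y) ∨ (B.Adj x y ∧ ¬ G.Adj x y)) := by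
    intro x y
    rw [Set.mem_symmDiff]
    simp [SimpleGraph.mem_edgeSet]
  have hsides : ∀ x y : V, y ∈ symmDiff (G.neighborSet x) (B.neighborSet x) →
      side y ≠ side x := by
    intro x y h
    rcases (hmem x y).1 h with h' | h'
    · exact (hG x y h'.1).symm
    · exact (hB x y h'.1).symm
  set F : Finset (Sym2 V) := (Finset.univ.filter (fun x => side x = b)).biUnion
      (fun x => (Set.toFinite (symmDiff (G.neighborSet x) (B.neighborSet x))).toFinset.image
        (fun y => s(x, y))) with hF
  have hfin : (symmDiff G.edgeSet B.edgeSet).Finite := Set.toFinite _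
  rw [Set.ncard_eq_toFinset_card _ hfin]
  have hFeq : hfin.toFinset = F := by
    apply Finset.ext
    intro e
    induction e using Sym2.inductionOn with
    | hf a c =>
      rw [Set.Finite.mem_toFinset]
      simp only [hF, Finset.mem_biUnion, Finset.mem_image, Finset.mem_filter, Finset.mem_univ,
        true_and, Set.Finite.mem_toFinset]
      constructor
      · intro he
        have hd : side a ≠ side c := by
          rcases (heme a c).1 he with h' | h'
          · exact hG a c h'.1
          · exact hB a c h'.1
        by_cases hab : side a = b
        · exact ⟨a, hab, c, (hmem a c).2 ((heme a c).1 he), rfl⟩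
        · have hcb : side c = b := by
            revert hd hab; cases side a <;> cases side c <;> cases b <;> simp
          refine ⟨c, hcb, a, (hmem c a).2 ?_, Sym2.eq_swap⟩
          rcases (heme a c).1 he with h' | h'
          · exact Or.inl ⟨h'.1.symm, fun hc => h'.2 hc.symm⟩
          · exact Or.inr ⟨h'.1.symm, fun hc => h'.2 hc.symm⟩
      · rintro ⟨x, hx, y, hy, he⟩
        rw [← he]
        exact (heme x y).2 ((hmem x y).1 hy)
  rw [hFeq, hF]
  rw [Finset.card_biUnion]
  · apply Finset.sum_congr rfl
    intro x _
    rw [Finset.card_image_of_injective _ (fun y z h => Sym2.congr_right.mp h)]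
    rw [← Set.ncard_eq_toFinset_card _ (Set.toFinite _)]
  · intro x hx y hy hxy
    simp only [Finset.coe_filter, Set.mem_setOf_eq, Finset.mem_univ, true_and] at hx hy
    rw [Function.onFun, Finset.disjoint_left]
    rintro e he₁ he₂
    simp only [Finset.mem_image, Set.Finite.mem_toFinset] at he₁ he₂
    obtain ⟨y₁, hy₁, he₁⟩ := he₁
    obtain ⟨y₂, hy₂, he₂⟩ := he₂
    have h12 : s(x, y₁) = s(y, y₂) := by rw [he₁, he₂]
    rcases Sym2.eq_iff.mp h12 with ⟨h1, _⟩ | ⟨h1, h2⟩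
    · exact hxy h1
    · have := hsides y y₂ hy₂
      rw [← h1, hx, hy] at this
      exact this rfl

/-- Forward direction: restriction of a biclustering of `G` to `G - u`. -/
lemma forward [Fintype V] [DecidableEq V] (G : SimpleGraph V) (side : V → Bool) (u : V)
    (B : SimpleGraph V) (hB : Biclustering B side) :
    ∃ B' : SimpleGraph {v : V // v ≠ u}, Biclustering B' (fun v => side v.1) ∧
      (symmDiff (G.induce {v : V | v ≠ u}).edgeSet B'.edgeSet).ncard
        ≤ (symmDiff G.edgeSet B.edgeSet).ncard := by
  classical
  refine ⟨B.comap (fun x => x.1), ⟨fun x y h => hB.1 x.1 y.1 h, ?_⟩, ?_⟩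
  · intro x y hr hs
    have hr' : B.Reachable x.1 y.1 :=
      hr.map (⟨fun z : {v : V // v ≠ u} => z.1, fun {a b} h => h⟩ :
        (B.comap (fun x : {v : V // v ≠ u} => x.1)) →g B)
    exact hB.2 x.1 y.1 hr' hs
  · have hinj : Function.Injective
        (Sym2.map (fun z : {v : V // v ≠ u} => z.1)) :=
      Sym2.map.injective Subtype.val_injective
    have himg : (Sym2.map (fun z : {v : V // v ≠ u} => z.1)) ''
        (symmDiff (G.induce {v : V | v ≠ u}).edgeSet
          ((B.comap (fun x : {v : V // v ≠ u} => x.1)).edgeSet))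
        ⊆ symmDiff G.edgeSet B.edgeSet := by
      rintro e ⟨e', he', rfl⟩
      induction e' using Sym2.inductionOn with
      | hf a c =>
        rw [Set.mem_symmDiff] at he'
        rw [Sym2.map_pair_eq, Set.mem_symmDiff]
        simpa [SimpleGraph.mem_edgeSet] using he'
    calc (symmDiff (G.induce {v : V | v ≠ u}).edgeSet
            ((B.comap (fun x : {v : V // v ≠ u} => x.1)).edgeSet)).ncard
        = ((Sym2.map (fun z : {v : V // v ≠ u} => z.1)) ''
            (symmDiff (G.induce {v : V | v ≠ u}).edgeSet
              ((B.comap (fun x : {v : V // v ≠ u} => x.1)).edgeSet))).ncard :=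
          (Set.ncard_image_of_injective _ hinj).symm
      _ ≤ (symmDiff G.edgeSet B.edgeSet).ncard :=
          Set.ncard_le_ncard himg (Set.toFinite _)

section BW
variable [Fintype V] [DecidableEq V]

set_option maxHeartbeats 1000000 in
lemma backward (G : SimpleGraph V) (side : V → Bool) (hG : BipartiteWith G side) (u : V)
    (hcard : (((⋃ v ∈ G.neighborSet u, G.neighborSet v)) \
        {w | side w = side u ∧ G.neighborSet w = G.neighborSet u}).ncard
      < {w | side w = side u ∧ G.neighborSet w = G.neighborSet u}.ncard)
    (B' : SimpleGraph {v : V // v ≠ u}) (hB' : Biclustering B' (fun v => side v.1)) :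
    ∃ B : SimpleGraph V, Biclustering B side ∧
      (symmDiff G.edgeSet B.edgeSet).ncard
        ≤ (symmDiff (G.induce {v : V | v ≠ u}).edgeSet B'.edgeSet).ncard := by
  classical
  set N : Set V := G.neighborSet u with hN
  set R : Set V := {w | side w = side u ∧ G.neighborSet w = G.neighborSet u} with hRdef
  set W : Set V := (⋃ v ∈ N, G.neighborSet v) \ R with hWdef
  have huR : u ∈ R := ⟨rfl, rfl⟩
  have hNside : ∀ y ∈ N, side y ≠ side u := fun y hy => (hG u y hy).symm
  have hNu : u ∉ N := fun h => G.loopless.irrefl u h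
  have hWR : ∀ w ∈ W, w ∉ R := fun w hw => hw.2
  have hWs : ∀ w ∈ W, side w = side u := by
    rintro w ⟨hw1, _⟩
    rw [Set.mem_iUnion₂] at hw1
    obtain ⟨v, hv, hwv⟩ := hw1
    have h1 : side w ≠ side v := (hG v w hwv).symm
    have h2 : side v ≠ side u := hNside v hv
    revert h1 h2
    cases side w <;> cases side v <;> cases side u <;> simp
  have hWu : ∀ w ∈ W, w ≠ u := fun w hw hc => (hWR w hw) (hc ▸ huR)
  have hRorW : ∀ x v, v ∈ N → G.Adj x v → x ∈ R ∨ x ∈ W := by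
    intro x v hv hxv
    by_cases hxR : x ∈ R
    · exact Or.inl hxR
    · exact Or.inr ⟨Set.mem_iUnion₂.2 ⟨v, hv, hxv.symm⟩, hxR⟩
  -- the injection φ from W into R \ {u}
  have hcard' : W.ncard ≤ (R \ {u}).ncard := by
    rw [Set.ncard_diff_singleton_of_mem huR]
    omega
  letI : Fintype ↥W := (Set.toFinite W).fintype
  letI : Fintype ↥(R \ {u}) := (Set.toFinite (R \ {u})).fintype
  have hWc : Fintype.card ↥W = W.ncard := by
    rw [Set.ncard_eq_toFinset_card', Set.toFinset_card]
  have hRc : Fintype.card ↥(R \ {u}) = (R \ {u}).ncard := by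
    rw [Set.ncard_eq_toFinset_card', Set.toFinset_card]
  obtain ⟨emb⟩ := Function.Embedding.nonempty_of_card_le (α := ↥W) (β := ↥(R \ {u}))
    (by rw [hWc, hRc]; exact hcard')
  set φ : V → V := fun v => if h : v ∈ W then ((emb ⟨v, h⟩ : ↥(R \ {u})) : V) else v with hφ
  have hφR : ∀ v ∈ W, φ v ∈ R := by
    intro v h
    simp only [hφ, dif_pos h]
    exact (emb ⟨v, h⟩).2.1
  have hφu : ∀ v ∈ W, φ v ≠ u := by
    intro v h
    simp only [hφ, dif_pos h]
    exact fun hc => (emb ⟨v, h⟩).2.2 (by simp [hc])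
  have hφinj : ∀ v₁ ∈ W, ∀ v₂ ∈ W, φ v₁ = φ v₂ → v₁ = v₂ := by
    intro v₁ h₁ v₂ h₂ h
    simp only [hφ, dif_pos h₁, dif_pos h₂] at h
    have := emb.injective (Subtype.val_injective h)
    exact congrArg Subtype.val this
  -- labels
  set L := B'.ConnectedComponent with hL
  set cl : {v : V // v ≠ u} → L := B'.connectedComponentMk with hcl
  have hadj : ∀ x y, B'.Adj x y ↔ (cl x = cl y ∧ side x.1 ≠ side y.1) := bicl_adj hB'
  set clE : V → Option L := fun v => if h : v = u then none else some (cl ⟨v, h⟩) with hclE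
  have hclEeq : ∀ v, clE v = if h : v = u then none else some (cl ⟨v, h⟩) := fun _ => rfl
  set Lab : V → Option L :=
    fun v => if v ∈ R ∨ v ∈ N ∨ (v ∈ W ∧ clE v = clE (φ v)) then none else clE v with hLab
  have hLabeq : ∀ v, Lab v
      = if v ∈ R ∨ v ∈ N ∨ (v ∈ W ∧ clE v = clE (φ v)) then none else clE v := fun _ => rfl
  set B : SimpleGraph V := clG Lab side with hB
  refine ⟨B, clG_biclustering _ _, ?_⟩
  -- cost formulas
  have hG' : BipartiteWith (G.induce {v : V | v ≠ u}) (fun v => side v.1) := by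
    intro x y h
    exact hG x.1 y.1 h
  have hcost2 : (symmDiff (G.induce {v : V | v ≠ u}).edgeSet B'.edgeSet).ncard
      = ∑ x' ∈ Finset.univ.filter (fun x' : {v : V // v ≠ u} => side x'.1 = side u),
          (symmDiff ((G.induce {v : V | v ≠ u}).neighborSet x') (B'.neighborSet x')).ncard :=
    cost_eq_sum (V := {v : V // v ≠ u}) (G.induce {v : V | v ≠ u}) B' _ hG' hB'.1 (side u)
  rw [cost_eq_sum G B side hG (clG_biclustering Lab side).1 (side u), hcost2]
  -- abbreviations
  set f : V → ℕ := fun x => (symmDiff (G.neighborSet x) (B.neighborSet x)).ncard with hf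
  have hfeq : ∀ x, f x = (symmDiff (G.neighborSet x) (B.neighborSet x)).ncard := fun _ => rfl
  set d : {v : V // v ≠ u} → ℕ :=
    fun x' => (symmDiff ((G.induce {v : V | v ≠ u}).neighborSet x') (B'.neighborSet x')).ncard
    with hd
  have hdeq : ∀ x', d x'
      = (symmDiff ((G.induce {v : V | v ≠ u}).neighborSet x') (B'.neighborSet x')).ncard :=
    fun _ => rfl
  set g : V → ℕ := fun x => if h : x = u then 0 else d ⟨x, h⟩ with hg
  have hgeq : ∀ x, g x = if h : x = u then 0 else d ⟨x, h⟩ := fun _ => rfl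
  -- transfer RHS to a sum over V
  have hRHS : (∑ x' ∈ Finset.univ.filter (fun x' : {v : V // v ≠ u} => side x'.1 = side u), d x')
      = ∑ x ∈ Finset.univ.filter (fun x : V => side x = side u), g x := by
    calc (∑ x' ∈ Finset.univ.filter (fun x' : {v : V // v ≠ u} => side x'.1 = side u), d x')
        = ∑ x' : {v : V // v ≠ u},
            (fun x : V => if side x = side u then g x else 0) x'.1 := by
          rw [Finset.sum_filter]
          apply Finset.sum_congr rfl
          intro x' _
          show (if side x'.1 = side u then d x' else 0)
            = (if side x'.1 = side u then g x'.1 else 0)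
          by_cases hx : side x'.1 = side u
          · rw [if_pos hx, if_pos hx, hgeq, dif_neg x'.2]
          · rw [if_neg hx, if_neg hx]
      _ = ∑ x ∈ Finset.univ.filter (fun x : V => x ≠ u),
            (if side x = side u then g x else 0) :=
          (Finset.sum_subtype (Finset.univ.filter (fun x : V => x ≠ u)) (by simp)
            (fun x : V => if side x = side u then g x else 0)).symm
      _ = ∑ x ∈ Finset.univ, (if side x = side u then g x else 0) := by
          rw [Finset.filter_ne']
          exact Finset.sum_erase _ (by rw [if_pos rfl, hgeq, dif_pos rfl])
      _ = ∑ x ∈ Finset.univ.filter (fun x : V => side x = side u), g x :=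
          (Finset.sum_filter _ _).symm
  rw [hRHS]
  -- the class sets
  set P : {v : V // v ≠ u} → Set V :=
    fun x' => {y | side y ≠ side u ∧ ∃ h : y ≠ u, cl ⟨y, h⟩ = cl x'} with hP
  have hPmem : ∀ x' y, y ∈ P x' ↔ (side y ≠ side u ∧ ∃ h : y ≠ u, cl ⟨y, h⟩ = cl x') :=
    fun _ _ => Iff.rfl
  -- opposite-side labels
  have hLabOppNone : ∀ y, side y ≠ side u → (Lab y = none ↔ y ∈ N) := by
    intro y hy
    have hyR : y ∉ R := fun hc => hy hc.1
    have hyW : y ∉ W := fun hc => hy (hWs y hc)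
    have hyu : y ≠ u := fun hc => hy (by rw [hc])
    constructor
    · intro h
      by_contra hyN
      rw [hLabeq y, if_neg (by tauto), hclEeq y, dif_neg hyu] at h
      exact nomatch h
    · intro hyN
      rw [hLabeq y, if_pos (Or.inr (Or.inl hyN))]
  have hLabOppSome : ∀ y (h : y ≠ u), side y ≠ side u → y ∉ N →
      Lab y = some (cl ⟨y, h⟩) := by
    intro y h hy hyN
    have hyR : y ∉ R := fun hc => hy hc.1
    have hyW : y ∉ W := fun hc => hy (hWs y hc)
    rw [hLabeq y, if_neg (by tauto), hclEeq y, dif_neg h]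
  -- B-neighborhoods
  have hBnbNone : ∀ x, side x = side u → Lab x = none → B.neighborSet x = N := by
    intro x hx hLx
    ext y
    rw [SimpleGraph.mem_neighborSet]
    constructor
    · rintro ⟨h1, h2⟩
      have hys : side y ≠ side u := by rw [← hx]; exact fun hc => h2 hc.symm
      exact (hLabOppNone y hys).1 (by rw [← h1, hLx])
    · intro hyN
      have hys : side y ≠ side u := hNside y hyN
      refine ⟨?_, ?_⟩
      · rw [hLx, (hLabOppNone y hys).2 hyN]
      · rw [hx]; exact fun hc => hys hc.symm
  have hBnbSome : ∀ x (hxu : x ≠ u), side x = side u → Lab x = some (cl ⟨x, hxu⟩) →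
      B.neighborSet x = P ⟨x, hxu⟩ \ N := by
    intro x hxu hx hLx
    ext y
    rw [SimpleGraph.mem_neighborSet]
    constructor
    · rintro ⟨h1, h2⟩
      have hys : side y ≠ side u := by rw [← hx]; exact fun hc => h2 hc.symm
      have hyN : y ∉ N := by
        intro hyN
        rw [(hLabOppNone y hys).2 hyN, hLx] at h1
        exact nomatch h1
      have hyu : y ≠ u := fun hc => hys (by rw [hc])
      rw [hLabOppSome y hyu hys hyN, hLx] at h1
      exact ⟨⟨hys, hyu, (Option.some.inj h1).symm⟩, hyN⟩
    · rintro ⟨⟨hys, hyu, hcl'⟩, hyN⟩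
      refine ⟨?_, ?_⟩
      · rw [hLabOppSome y hyu hys hyN, hLx, hcl']
      · rw [hx]; exact fun hc => hys hc.symm
  -- images of primed neighborhoods
  have hval : Function.Injective (fun (y : {v : V // v ≠ u}) => (y : V)) :=
    fun a b h => Subtype.ext h
  have hB'val : ∀ x', side x'.1 = side u →
      (fun (y : {v : V // v ≠ u}) => (y : V)) '' (B'.neighborSet x') = P x' := by
    intro x' hx
    ext y
    constructor
    · rintro ⟨y', hy', rfl⟩
      rw [SimpleGraph.mem_neighborSet, hadj] at hy'
      refine ⟨by rw [← hx]; exact fun hc => hy'.2 hc.symm, y'.2, hy'.1.symm⟩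
    · rintro ⟨hys, hyu, hcl'⟩
      refine ⟨⟨y, hyu⟩, ?_, rfl⟩
      rw [SimpleGraph.mem_neighborSet, hadj]
      exact ⟨hcl'.symm, by rw [hx]; exact fun hc => hys hc.symm⟩
  have hG'val : ∀ x' : {v : V // v ≠ u},
      (fun (y : {v : V // v ≠ u}) => (y : V)) '' ((G.induce {v : V | v ≠ u}).neighborSet x')
        = G.neighborSet x'.1 \ {u} := by
    intro x'
    ext y
    constructor
    · rintro ⟨y', hy', rfl⟩
      rw [SimpleGraph.mem_neighborSet] at hy'
      exact ⟨hy', y'.2⟩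
    · rintro ⟨hadj', hne⟩
      exact ⟨⟨y, hne⟩, hadj', rfl⟩
  have hgval : ∀ x (hxu : x ≠ u), side x = side u →
      g x = (symmDiff (G.neighborSet x) (P ⟨x, hxu⟩)).ncard := by
    intro x hxu hx
    have hu : u ∉ G.neighborSet x := fun h => (hG x u h) (by rw [hx])
    rw [hgeq, dif_neg hxu, hdeq]
    rw [← Set.ncard_image_of_injective _ hval,
      Set.image_symmDiff hval, hG'val ⟨x, hxu⟩, hB'val ⟨x, hxu⟩ hx,
      Set.diff_singleton_eq_self hu]
  -- the claims
  have hclaim1 : ∀ x ∈ R, f x = 0 := by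
    intro x hx
    have hLx : Lab x = none := by rw [hLabeq x, if_pos (Or.inl hx)]
    have h1 : G.neighborSet x = N := hx.2
    rw [hfeq, h1, hBnbNone x hx.1 hLx, symmDiff_self, Set.bot_eq_empty, Set.ncard_empty]
  have hclaim2 : ∀ x ∈ W, f x ≤ g x + g (φ x) := by
    intro x hxW
    have hxu : x ≠ u := hWu x hxW
    have hxs : side x = side u := hWs x hxW
    have hxR : x ∉ R := hWR x hxW
    have hxN : x ∉ N := fun hc => (hNside x hc) hxs
    have hrR : φ x ∈ R := hφR x hxW
    have hru : φ x ≠ u := hφu x hxW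
    have hgr : g (φ x) = (symmDiff N (P ⟨φ x, hru⟩)).ncard := by
      rw [hgval (φ x) hru hrR.1, hrR.2]
    by_cases hadopt : clE x = clE (φ x)
    · -- adopt
      have hLx : Lab x = none := by
        rw [hLabeq x, if_pos (Or.inr (Or.inr ⟨hxW, hadopt⟩))]
      have hcleq : cl ⟨x, hxu⟩ = cl ⟨φ x, hru⟩ := by
        rw [hclEeq x, hclEeq (φ x), dif_neg hxu, dif_neg hru] at hadopt
        exact Option.some.inj hadopt
      have hPeq : P ⟨x, hxu⟩ = P ⟨φ x, hru⟩ := by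
        ext y
        constructor
        · rintro ⟨h1, h2, h3⟩; exact ⟨h1, h2, h3.trans hcleq⟩
        · rintro ⟨h1, h2, h3⟩; exact ⟨h1, h2, h3.trans hcleq.symm⟩
      rw [hfeq, hBnbNone x hxs hLx, hgval x hxu hxs, hgr, ← hPeq]
      have htri : symmDiff (G.neighborSet x) N ⊆
          (symmDiff (G.neighborSet x) (P ⟨x, hxu⟩)) ∪ (symmDiff (P ⟨x, hxu⟩) N) :=
        fun y hy => symmDiff_triangle (G.neighborSet x) (P ⟨x, hxu⟩) N hy
      calc (symmDiff (G.neighborSet x) N).ncard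
          ≤ ((symmDiff (G.neighborSet x) (P ⟨x, hxu⟩)) ∪ (symmDiff (P ⟨x, hxu⟩) N)).ncard :=
            Set.ncard_le_ncard htri (Set.toFinite _)
        _ ≤ (symmDiff (G.neighborSet x) (P ⟨x, hxu⟩)).ncard
              + (symmDiff (P ⟨x, hxu⟩) N).ncard :=
            Set.ncard_union_le _ _
        _ = (symmDiff (G.neighborSet x) (P ⟨x, hxu⟩)).ncard
              + (symmDiff N (P ⟨x, hxu⟩)).ncard := by
            rw [symmDiff_comm (P ⟨x, hxu⟩) N]
    · -- keep
      have hLx : Lab x = some (cl ⟨x, hxu⟩) := by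
        rw [hLabeq x, if_neg (by tauto), hclEeq x, dif_neg hxu]
      rw [hfeq, hBnbSome x hxu hxs hLx, hgval x hxu hxs, hgr]
      have hsub1 : symmDiff (G.neighborSet x) (P ⟨x, hxu⟩ \ N) ⊆
          (symmDiff (G.neighborSet x) (P ⟨x, hxu⟩)) ∪ (P ⟨x, hxu⟩ ∩ N) := by
        intro y hy
        rcases Set.mem_symmDiff.1 hy with ⟨hyA, hyPN⟩ | ⟨hyPN, hyA⟩
        · by_cases hyP : y ∈ P ⟨x, hxu⟩
          · right
            refine ⟨hyP, ?_⟩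
            by_contra hyN
            exact hyPN ⟨hyP, hyN⟩
          · left; exact Set.mem_symmDiff.2 (Or.inl ⟨hyA, hyP⟩)
        · left; exact Set.mem_symmDiff.2 (Or.inr ⟨hyPN.1, hyA⟩)
      have hsub2 : P ⟨x, hxu⟩ ∩ N ⊆ symmDiff N (P ⟨φ x, hru⟩) := by
        rintro y ⟨hyP, hyN⟩
        apply Set.mem_symmDiff.2
        left
        refine ⟨hyN, ?_⟩
        rintro ⟨hys, hyu, hcly⟩
        obtain ⟨_, hyu', hclx⟩ := hyP
        apply hadopt
        rw [hclEeq x, hclEeq (φ x), dif_neg hxu, dif_neg hru]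
        exact congrArg some (hclx.symm.trans hcly)
      calc (symmDiff (G.neighborSet x) (P ⟨x, hxu⟩ \ N)).ncard
          ≤ ((symmDiff (G.neighborSet x) (P ⟨x, hxu⟩)) ∪ (P ⟨x, hxu⟩ ∩ N)).ncard :=
            Set.ncard_le_ncard hsub1 (Set.toFinite _)
        _ ≤ (symmDiff (G.neighborSet x) (P ⟨x, hxu⟩)).ncard + (P ⟨x, hxu⟩ ∩ N).ncard :=
            Set.ncard_union_le _ _
        _ ≤ (symmDiff (G.neighborSet x) (P ⟨x, hxu⟩)).ncard
              + (symmDiff N (P ⟨φ x, hru⟩)).ncard := by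
            have := Set.ncard_le_ncard hsub2 (Set.toFinite _)
            omega
  have hclaim3 : ∀ x, side x = side u → x ∉ R → x ∉ W → f x ≤ g x := by
    intro x hxs hxR hxW
    have hxu : x ≠ u := fun hc => hxR (hc ▸ huR)
    have hxN : x ∉ N := fun hc => (hNside x hc) hxs
    have hLx : Lab x = some (cl ⟨x, hxu⟩) := by
      rw [hLabeq x, if_neg (by tauto), hclEeq x, dif_neg hxu]
    rw [hfeq, hBnbSome x hxu hxs hLx, hgval x hxu hxs]
    have hAN : ∀ y ∈ G.neighborSet x, y ∉ N := by
      intro y hy hyN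
      rcases hRorW x y hyN hy with h | h
      · exact hxR h
      · exact hxW h
    have hsub : symmDiff (G.neighborSet x) (P ⟨x, hxu⟩ \ N) ⊆
        symmDiff (G.neighborSet x) (P ⟨x, hxu⟩) := by
      intro y hy
      rcases Set.mem_symmDiff.1 hy with ⟨hyA, hyPN⟩ | ⟨hyPN, hyA⟩
      · apply Set.mem_symmDiff.2
        left
        exact ⟨hyA, fun hyP => hyPN ⟨hyP, hAN y hyA⟩⟩
      · exact Set.mem_symmDiff.2 (Or.inr ⟨hyPN.1, hyA⟩)
    exact Set.ncard_le_ncard hsub (Set.toFinite _)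
  -- assemble the sums
  set F : Finset V := Finset.univ.filter (fun x : V => side x = side u) with hF
  have hsplitf : ∀ h : V → ℕ, ∑ x ∈ F, h x
      = ∑ x ∈ F.filter (fun x => x ∈ R), h x + (∑ x ∈ (F.filter (fun x => x ∉ R)).filter
          (fun x => x ∈ W), h x + ∑ x ∈ (F.filter (fun x => x ∉ R)).filter
          (fun x => x ∉ W), h x) := by
    intro h
    rw [Finset.sum_filter_add_sum_filter_not (F.filter (fun x => x ∉ R)) (fun x => x ∈ W) h]
    exact (Finset.sum_filter_add_sum_filter_not F (fun x => x ∈ R) h).symm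
  have hWmemF : ∀ x ∈ (F.filter (fun x => x ∉ R)).filter (fun x => x ∈ W), x ∈ W := by
    intro x hx
    simp only [Finset.mem_filter] at hx
    exact hx.2
  calc ∑ x ∈ F, f x
      = ∑ x ∈ F.filter (fun x => x ∈ R), f x + (∑ x ∈ (F.filter (fun x => x ∉ R)).filter
          (fun x => x ∈ W), f x + ∑ x ∈ (F.filter (fun x => x ∉ R)).filter
          (fun x => x ∉ W), f x) := hsplitf f
    _ ≤ 0 + ((∑ x ∈ (F.filter (fun x => x ∉ R)).filter (fun x => x ∈ W), (g x + g (φ x)))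
          + ∑ x ∈ (F.filter (fun x => x ∉ R)).filter (fun x => x ∉ W), g x) := by
        gcongr with x hx x hx
        · exact Nat.le_zero.2 (Finset.sum_eq_zero (fun x hx => by
            simp only [Finset.mem_filter] at hx
            exact hclaim1 x hx.2))
        · exact hclaim2 x (hWmemF x hx)
        · simp only [hF, Finset.mem_filter, Finset.mem_univ, true_and] at hx
          exact hclaim3 x hx.1.1 hx.1.2 hx.2
    _ = (∑ x ∈ (F.filter (fun x => x ∉ R)).filter (fun x => x ∈ W), g (φ x))
          + (0 + (∑ x ∈ (F.filter (fun x => x ∉ R)).filter (fun x => x ∈ W), g x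
          + ∑ x ∈ (F.filter (fun x => x ∉ R)).filter (fun x => x ∉ W), g x)) := by
        rw [Finset.sum_add_distrib]
        ring
    _ ≤ (∑ x ∈ F.filter (fun x => x ∈ R), g x)
          + (0 + (∑ x ∈ (F.filter (fun x => x ∉ R)).filter (fun x => x ∈ W), g x
          + ∑ x ∈ (F.filter (fun x => x ∉ R)).filter (fun x => x ∉ W), g x)) := by
        gcongr
        rw [← Finset.sum_image (f := g) (g := φ)
          (fun x hx y hy h => hφinj x (hWmemF x hx) y (hWmemF y hy) h)]
        apply Finset.sum_le_sum_of_subset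
        intro z hz
        simp only [Finset.mem_image] at hz
        obtain ⟨x, hx, rfl⟩ := hz
        have hxW := hWmemF x hx
        simp only [hF, Finset.mem_filter, Finset.mem_univ, true_and]
        exact ⟨(hφR x hxW).1, hφR x hxW⟩
    _ = ∑ x ∈ F, g x := by
        rw [hsplitf g]
        ring
end BW

end StmtAux

theorem stmt_4 {V : Type*} [Fintype V] [DecidableEq V]
    (G : SimpleGraph V) (side : V → Bool) (hG : BipartiteWith G side)
    (u : V) (R : Set V)
    (hR : R = {w | side w = side u ∧ G.neighborSet w = G.neighborSet u})
    (hcard : ((⋃ s ∈ ⋃ r ∈ R, G.neighborSet r, G.neighborSet s) \ R).ncard < R.ncard)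
    (k : ℕ) :
    (∃ B : SimpleGraph V, Biclustering B side ∧
        (symmDiff G.edgeSet B.edgeSet).ncard ≤ k) ↔
    (∃ B' : SimpleGraph {v : V // v ≠ u}, Biclustering B' (fun v => side v.1) ∧
        (symmDiff (G.induce {v : V | v ≠ u}).edgeSet B'.edgeSet).ncard ≤ k) := by
  subst hR
  constructor
  · rintro ⟨B, hB, hk⟩
    obtain ⟨B', h1, h2⟩ := StmtAux.forward G side u B hB
    exact ⟨B', h1, le_trans h2 hk⟩
  · rintro ⟨B', hB', hk⟩
    have hU : (⋃ r ∈ {w | side w = side u ∧ G.neighborSet w = G.neighborSet u},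
        G.neighborSet r) = G.neighborSet u := by
      apply subset_antisymm
      · rintro y hy
        rw [Set.mem_iUnion₂] at hy
        obtain ⟨r, hr, hyr⟩ := hy
        exact hr.2 ▸ hyr
      · intro y hy
        exact Set.mem_iUnion₂.2 ⟨u, ⟨rfl, rfl⟩, hy⟩
    rw [hU] at hcard
    obtain ⟨B, h1, h2⟩ := StmtAux.backward G side hG u hcard B' hB'
    exact ⟨B, h1, h2.trans hk⟩
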